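/- Let D : ℝ^d → [0,∞) be a depth function (upper semicontinuous, vanishing at infinity) with maximum value α_max, and trimmed regions D_α = {z : D(z) ≥ α}. If (α_n) is a sequence increasing to α_0 ∈ (0, α_max], then the compact sets D_{α_n} converge to D_{α_0} in the Hausdorff metric. -/
import Mathlib


open Filter Metric Set Topology

/-- For a depth function `D` (upper semicontinuous, vanishing at infinity) with maximum
value `αmax`, if `(α n)` increases to `α₀ ∈ (0, αmax]`, then the trimmed regions
`D_{α n}` converge to `D_{α₀}` in the Hausdorff metric. -/
theorem trimmed_regions_left_continuous {d : ℕ}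
    (D : EuclideanSpace ℝ (Fin d) → ℝ)
    (hnn : ∀ z, 0 ≤ D z)
    (husc : UpperSemicontinuous D)
    (hvan : Tendsto D (cocompact (EuclideanSpace ℝ (Fin d))) (nhds 0))
    (αmax : ℝ) (hmax : IsGreatest (Set.range D) αmax)
    (α : ℕ → ℝ) (α₀ : ℝ)
    (hmono : Monotone α) (hpos : ∀ n, 0 < α n)
    (hlim : Tendsto α atTop (nhds α₀))
    (h0 : 0 < α₀) (hle : α₀ ≤ αmax) :
    Tendsto (fun n => hausdorffDist {z | α n ≤ D z} {z | α₀ ≤ D z}) atTop (nhds 0) := by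
  set A : ℕ → Set (EuclideanSpace ℝ (Fin d)) := fun n => {z | α n ≤ D z} with hA
  set B : Set (EuclideanSpace ℝ (Fin d)) := {z | α₀ ≤ D z} with hB
  have hαle : ∀ n, α n ≤ α₀ := fun n => hmono.ge_of_tendsto hlim n
  have hBsub : ∀ n, B ⊆ A n := fun n z hz => le_trans (hαle n) hz
  have hAanti : ∀ {m n}, m ≤ n → A n ⊆ A m :=
    fun {m n} h z hz => le_trans (hmono h) hz
  have hclosed : ∀ a : ℝ, IsClosed {z | a ≤ D z} := fun a => husc.isClosed_preimage a
  -- boundedness of A 0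
  have hbd : Bornology.IsBounded (A 0) := by
    have hev : ∀ᶠ z in cocompact (EuclideanSpace ℝ (Fin d)), D z < α 0 :=
      hvan.eventually (gt_mem_nhds (hpos 0))
    obtain ⟨K, hK, hKsub⟩ := mem_cocompact.1 hev
    refine hK.isBounded.subset fun z hz => ?_
    by_contra hzK
    have hz2 : α 0 ≤ D z := hz
    exact not_le.2 (hKsub hzK) hz2
  have hcomp : ∀ n, IsCompact (A n) := fun n =>
    isCompact_iff_isClosed_bounded.2 ⟨hclosed _, (hbd.subset (hAanti (Nat.zero_le n)))⟩
  -- intersection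
  have hInter : ⋂ n, A n ⊆ B := by
    intro z hz
    simp only [mem_iInter] at hz
    exact le_of_tendsto hlim (Eventually.of_forall hz)
  -- main step: for ε > 0, eventually A n ⊆ thickening ε B
  have key : ∀ ε : ℝ, 0 < ε → ∃ N, ∀ n, N ≤ n → A n ⊆ thickening ε B := by
    intro ε hε
    by_contra hcon
    push_neg at hcon
    have hC : ∀ n, (A n ∩ (thickening ε B)ᶜ).Nonempty := by
      intro n
      obtain ⟨m, hm, hns⟩ := hcon n
      obtain ⟨z, hz, hz'⟩ := not_subset.1 hns
      exact ⟨z, hAanti hm hz, hz'⟩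
    have hCcomp : ∀ n, IsCompact (A n ∩ (thickening ε B)ᶜ) := fun n =>
      (hcomp n).inter_right (isOpen_thickening.isClosed_compl)
    have hCclosed : ∀ n, IsClosed (A n ∩ (thickening ε B)ᶜ) := fun n =>
      (hclosed _).inter (isOpen_thickening.isClosed_compl)
    have hdir : Directed (· ⊇ ·) (fun n => A n ∩ (thickening ε B)ᶜ) := by
      intro m n
      exact ⟨max m n, inter_subset_inter_left _ (hAanti (le_max_left m n)),
        inter_subset_inter_left _ (hAanti (le_max_right m n))⟩
    obtain ⟨z, hz⟩ := IsCompact.nonempty_iInter_of_directed_nonempty_isCompact_isClosed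
      _ hdir hC hCcomp hCclosed
    simp only [mem_iInter, mem_inter_iff] at hz
    have hzB : z ∈ B := hInter (mem_iInter.2 fun n => (hz n).1)
    exact (hz 0).2 (self_subset_thickening hε B hzB)
  rw [Metric.tendsto_atTop]
  intro ε hε
  obtain ⟨N, hN⟩ := key (ε / 2) (half_pos hε)
  refine ⟨N, fun n hn => ?_⟩
  rw [Real.dist_eq, sub_zero, abs_of_nonneg hausdorffDist_nonneg]
  have hle2 : hausdorffDist (A n) B ≤ ε / 2 := by
    refine hausdorffDist_le_of_mem_dist (le_of_lt (half_pos hε)) ?_ ?_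
    · intro x hx
      obtain ⟨y, hy, hxy⟩ := mem_thickening_iff.1 (hN n hn hx)
      exact ⟨y, hy, le_of_lt hxy⟩
    · intro x hx
      exact ⟨x, hBsub n hx, by rw [dist_self]; exact (half_pos hε).le⟩
  exact lt_of_le_of_lt hle2 (half_lt_self hε)
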